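/- Let H be a finite simple graph and consider the fully homogeneous BNPG on H with common cost c = 2 and common externality function g given by g(m) = m for m ≤ 3 and g(m) = m + 1 for m ≥ 4. Then this game has a PSNE in which at least one player invests if and only if H has a nonempty set S of vertices such that every vertex of S has exactly 3 neighbors in S (i.e., H has a nonempty 3-regular induced subgraph). -/
import Mathlib


/-- Finite difference `Δg(m) = g(m+1) − g(m)`. -/
def Δg (g : ℕ → ℝ) (m : ℕ) : ℝ := g (m + 1) - g m

/-- Number of investing neighbors of player `i` under profile `x` in graph `G`. -/
noncomputable def nInv {V : Type*} (G : SimpleGraph V) (x : V → Bool) (i : V) : ℕ :=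
  {j | G.Adj i j ∧ x j = true}.ncard

/-- Pure-strategy Nash equilibrium of the BNPG on `G` with externalities `g` and costs `c`. -/
def IsPSNE {V : Type*} (G : SimpleGraph V) (g : V → ℕ → ℝ) (c : V → ℝ)
    (x : V → Bool) : Prop :=
  ∀ i, (x i = true → c i ≤ Δg (g i) (nInv G x i)) ∧
       (x i = false → Δg (g i) (nInv G x i) ≤ c i)

lemma dg_val (g : ℕ → ℝ) (hg : ∀ m, m ≤ 3 → g m = m) (hg' : ∀ m, 4 ≤ m → g m = m + 1)
    (m : ℕ) : Δg g m = if m = 3 then 2 else 1 := by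
  unfold Δg
  match m with
  | 0 => simp [hg 0 (by norm_num), hg 1 (by norm_num)]
  | 1 => norm_num [hg 1 (by norm_num), hg 2 (by norm_num)]
  | 2 => norm_num [hg 2 (by norm_num), hg 3 (by norm_num)]
  | 3 => norm_num [hg 3 (by norm_num), hg' 4 (by norm_num)]
  | (n+4) =>
    rw [hg' (n+4) (by omega), hg' (n+5) (by omega)]
    push_cast
    simp
    ring

/-- the fully homogeneous BNPG on `H` with cost `c = 2` and externality
`g(m) = m` for `m ≤ 3`, `g(m) = m + 1` for `m ≥ 4`, has a PSNE in which at least one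
player invests iff `H` has a nonempty set `S` of vertices each having exactly `3`
neighbors in `S` (a nonempty `3`-regular induced subgraph). -/
theorem stmt13 {V : Type*} [Fintype V] (H : SimpleGraph V)
    (g : ℕ → ℝ) (hg : ∀ m, m ≤ 3 → g m = m) (hg' : ∀ m, 4 ≤ m → g m = m + 1) :
    (∃ x : V → Bool, IsPSNE H (fun _ => g) (fun _ => (2 : ℝ)) x ∧ ∃ i, x i = true) ↔
      ∃ S : Set V, S.Nonempty ∧ ∀ i ∈ S, {j | H.Adj i j ∧ j ∈ S}.ncard = 3 := by
  have dg := dg_val g hg hg'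
  constructor
  · rintro ⟨x, hx, i₀, hi₀⟩
    refine ⟨{i | x i = true}, ⟨i₀, hi₀⟩, ?_⟩
    intro i hi
    have h2 := (hx i).1 hi
    rw [dg] at h2
    have : nInv H x i = 3 := by
      by_contra h
      rw [if_neg h] at h2; norm_num at h2
    simpa [nInv, Set.mem_setOf_eq] using this
  · rintro ⟨S, ⟨i₀, hi₀⟩, hS⟩
    classical
    refine ⟨fun j => decide (j ∈ S), ?_, i₀, by simp [hi₀]⟩
    intro i
    have hn : nInv H (fun j => decide (j ∈ S)) i = {j | H.Adj i j ∧ j ∈ S}.ncard := by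
      simp [nInv]
    constructor
    · intro hi
      simp only [decide_eq_true_eq] at hi
      rw [dg, hn, hS i hi, if_pos rfl]
    · intro _
      rw [dg]
      split <;> norm_num
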